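/- Let C be a preadditive category in which every idempotent splits, and let X be an object of C. Write R = End(X) and let J = J(R) be the Jacobson radical of R. Suppose R is semiperfect, i.e. the quotient ring R/J is semisimple and every idempotent of R/J is the image of an idempotent of R under the quotient map. If X is indecomposable, then R is a local ring. -/

import Mathlib

open CategoryTheory Limits

/-- An object of a preadditive category is indecomposable if it is not a zero object and,
whenever it is isomorphic to the biproduct of two objects `Y` and `Z`, one of `Y`, `Z`
is a zero object. -/
def IsIndecomposable {C : Type*} [Category C] [Preadditive C] (X : C) : Prop :=
  ¬ IsZero X ∧ ∀ (Y Z : C) (b : BinaryBicone Y Z), b.IsBilimit → (X ≅ b.pt) →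
    IsZero Y ∨ IsZero Z

/-- In an idempotent complete preadditive category, the endomorphism ring of an
indecomposable object has no nontrivial idempotents. -/
lemma aux_idem_trivial {C : Type*} [Category C] [Preadditive C] [IsIdempotentComplete C]
    (X : C) (hX : IsIndecomposable X) (e : End X) (he : e * e = e) : e = 0 ∨ e = 1 := by
  let e' : X ⟶ X := e
  have hcomp : e' ≫ e' = e' := he
  obtain ⟨Y, i₁, r₁, hir₁, hri₁⟩ := IsIdempotentComplete.idempotents_split X e' hcomp
  have hq : (𝟙 X - e') ≫ (𝟙 X - e') = 𝟙 X - e' := by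
    simp only [Preadditive.sub_comp, Preadditive.comp_sub, Category.id_comp, Category.comp_id,
      hcomp]
    abel
  obtain ⟨Z, i₂, r₂, hir₂, hri₂⟩ := IsIdempotentComplete.idempotents_split X (𝟙 X - e') hq
  have hi₁e : i₁ ≫ e' = i₁ := by
    rw [← hri₁, ← Category.assoc, hir₁, Category.id_comp]
  have hi₂q : i₂ ≫ (𝟙 X - e') = i₂ := by
    rw [← hri₂, ← Category.assoc, hir₂, Category.id_comp]
  have hi₂e : i₂ ≫ e' = 0 := by
    have h' : i₂ - i₂ ≫ e' = i₂ := by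
      simpa only [Preadditive.comp_sub, Category.comp_id] using hi₂q
    calc i₂ ≫ e' = i₂ - (i₂ - i₂ ≫ e') := by abel
      _ = 0 := by rw [h']; abel
  have her₁ : e' ≫ r₁ = r₁ := by
    rw [← hri₁, Category.assoc, hir₁, Category.comp_id]
  have hqr₂ : (𝟙 X - e') ≫ r₂ = r₂ := by
    rw [← hri₂, Category.assoc, hir₂, Category.comp_id]
  have hi₁r₂ : i₁ ≫ r₂ = 0 := by
    have h : i₁ ≫ (𝟙 X - e') = 0 := by
      simp only [Preadditive.comp_sub, Category.comp_id, hi₁e]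
      abel
    rw [← hqr₂, ← Category.assoc, h, zero_comp]
  have hi₂r₁ : i₂ ≫ r₁ = 0 := by
    rw [← her₁, ← Category.assoc, hi₂e, zero_comp]
  let b : BinaryBicone Y Z :=
    { pt := X
      fst := r₁
      snd := r₂
      inl := i₁
      inr := i₂
      inl_fst := hir₁
      inl_snd := hi₁r₂
      inr_fst := hi₂r₁
      inr_snd := hir₂ }
  have htotal : b.fst ≫ b.inl + b.snd ≫ b.inr = 𝟙 b.pt := by
    show r₁ ≫ i₁ + r₂ ≫ i₂ = 𝟙 X
    rw [hri₁, hri₂]; abel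
  have hbil : b.IsBilimit := isBinaryBilimitOfTotal b htotal
  rcases hX.2 Y Z b hbil (Iso.refl X) with hY | hZ
  · left
    have h0 : i₁ = 0 := hY.eq_of_src i₁ 0
    show e' = 0
    rw [← hri₁, h0, comp_zero]
  · right
    have h0 : i₂ = 0 := hZ.eq_of_src i₂ 0
    have h1 : 𝟙 X - e' = 0 := by rw [← hri₂, h0, comp_zero]
    show e' = 𝟙 X
    calc e' = 𝟙 X - (𝟙 X - e') := by abel
      _ = 𝟙 X := by rw [h1]; abel

/-- let `C` be a preadditive category in which every idempotent splits and
`X` an object of `C`.  Write `R = End X` and let `J` be the Jacobson radical of `R`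
(the intersection of all maximal left ideals, which is a two-sided ideal).  If `R` is
semiperfect — i.e. `R/J` is a semisimple ring and every idempotent of `R/J` lifts to an
idempotent of `R` — and `X` is indecomposable, then `R` is a local ring. -/
theorem local_end_of_indecomposable_of_semiperfect
    {C : Type*} [Category C] [Preadditive C] [IsIdempotentComplete C] (X : C)
    (J : TwoSidedIdeal (End X))
    (hJ : TwoSidedIdeal.asIdeal J = Ideal.jacobson (⊥ : Ideal (End X)))
    (hss : IsSemisimpleRing J.ringCon.Quotient)
    (hlift : ∀ y : J.ringCon.Quotient, y * y = y →
      ∃ e : End X, e * e = e ∧ RingCon.mk' J.ringCon e = y)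
    (hX : IsIndecomposable X) :
    IsLocalRing (End X) := by
  set R := End X with hR
  set Q := J.ringCon.Quotient with hQ
  set f : R →+* Q := RingCon.mk' J.ringCon with hf
  -- R is nontrivial
  haveI hnt : Nontrivial R := by
    refine ⟨1, 0, fun h10 => hX.1 ?_⟩
    rw [IsZero.iff_id_eq_zero]
    exact h10
  -- f is surjective
  have hsurj : Function.Surjective f := fun q => Quotient.exists_rep q
  -- membership in J vs the quotient map
  have hmemJ : ∀ x : R, f x = 0 ↔ x ∈ J := by
    intro x
    constructor
    · intro h
      have h' : J.ringCon x 0 := J.ringCon.eq.mp h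
      simpa using (J.rel_iff x 0).mp h'
    · intro h
      have h' : J.ringCon x 0 := (J.rel_iff x 0).mpr (by simpa using h)
      exact J.ringCon.eq.mpr h'
  -- Q is nontrivial
  haveI hQnt : Nontrivial Q := by
    refine ⟨1, 0, fun h => ?_⟩
    have h1J : (1 : R) ∈ J := (hmemJ 1).mp (by simpa using h)
    have h1' : (1 : R) ∈ TwoSidedIdeal.asIdeal J := TwoSidedIdeal.mem_asIdeal.mpr h1J
    rw [hJ] at h1'
    have htop : Ideal.jacobson (⊥ : Ideal R) = ⊤ := Ideal.eq_top_of_isUnit_mem _ h1' isUnit_one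
    exact absurd (Ideal.jacobson_eq_top_iff.mp htop) bot_ne_top
  -- idempotents in Q are trivial
  have hQidem : ∀ q : Q, q * q = q → q = 0 ∨ q = 1 := by
    intro q hqq
    obtain ⟨e, he, hfe⟩ := hlift q hqq
    rcases aux_idem_trivial X hX e he with h | h
    · left; rw [← hfe, h]; exact f.map_zero
    · right; rw [← hfe, h]; exact f.map_one
  -- every nonzero element of Q has a left inverse
  have hQleft : ∀ q : Q, q ≠ 0 → ∃ u : Q, u * q = 1 := by
    intro q hq
    haveI : ComplementedLattice (Submodule Q Q) := hss.toComplementedLattice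
    obtain ⟨N', hc⟩ := exists_isCompl (Submodule.span Q {q})
    set N := Submodule.span Q {q} with hN
    set π := Submodule.linearProjOfIsCompl N N' hc with hπ
    set e : Q := ((π 1 : ↥N) : Q) with he_def
    have hπx : ∀ x : Q, (π x : Q) = x * e := by
      intro x
      have h1 : π x = x • π 1 := by
        conv_lhs => rw [show x = x • (1 : Q) by simp]
        exact map_smul π x 1
      rw [h1]; simp [he_def]
    have hee : e * e = e := by
      have h1 : (π e : Q) = e * e := hπx e
      have h2 : π e = π 1 := by
        rw [he_def]; exact Submodule.linearProjOfIsCompl_apply_left hc (π 1)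
      rw [h2, ← he_def] at h1
      exact h1.symm
    rcases hQidem e hee with h0 | h1
    · exfalso
      have hqN : q ∈ N := Submodule.mem_span_singleton_self q
      have hq1 : (π q : Q) = q := by
        have := Submodule.linearProjOfIsCompl_apply_left hc ⟨q, hqN⟩
        exact congrArg Subtype.val this
      rw [hπx q, h0, mul_zero] at hq1
      exact hq hq1.symm
    · have h1N : (1 : Q) ∈ N := by
        rw [← h1, he_def]; exact (π 1).2
      obtain ⟨u, hu⟩ := Submodule.mem_span_singleton.mp h1N
      exact ⟨u, by rwa [smul_eq_mul] at hu⟩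
  -- every nonzero element of Q is a unit
  have hQunit : ∀ q : Q, q ≠ 0 → IsUnit q := by
    intro q hq
    obtain ⟨u, hu⟩ := hQleft q hq
    have hu0 : u ≠ 0 := by
      rintro rfl
      rw [zero_mul] at hu
      exact one_ne_zero hu.symm
    obtain ⟨v, hv⟩ := hQleft u hu0
    have hvq : v = q := by
      calc v = v * (u * q) := by rw [hu, mul_one]
        _ = v * u * q := by rw [mul_assoc]
        _ = q := by rw [hv, one_mul]
    exact ⟨⟨q, u, by rw [← hvq]; exact hv, hu⟩, rfl⟩
  -- elements of J are in the Jacobson radical of R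
  have hJrad : ∀ x : R, x ∈ J → x ∈ Ideal.jacobson (⊥ : Ideal R) := by
    intro x hx
    rw [← hJ]
    exact TwoSidedIdeal.mem_asIdeal.mpr hx
  -- if f a is a unit, a has a left inverse
  have hleft : ∀ a : R, IsUnit (f a) → ∃ u : R, u * a = 1 := by
    intro a ha
    obtain ⟨w, hw1, hw2⟩ := isUnit_iff_exists.mp ha
    obtain ⟨y, hy⟩ := hsurj w
    have hmem : y * a - 1 ∈ J := by
      apply (hmemJ _).mp
      rw [f.map_sub, f.map_mul, f.map_one, hy, hw2, sub_self]
    obtain ⟨s, hs⟩ := Ideal.exists_mul_sub_mem_of_sub_one_mem_jacobson (y * a)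
      (hJrad _ hmem)
    rw [Ideal.mem_bot, sub_eq_zero] at hs
    exact ⟨s * y, by rw [mul_assoc]; exact hs⟩
  -- if f a is a unit, a is a unit
  have hunitlift : ∀ a : R, IsUnit (f a) → IsUnit a := by
    intro a ha
    obtain ⟨u, hu⟩ := hleft a ha
    obtain ⟨w, hw1, hw2⟩ := isUnit_iff_exists.mp ha
    have hfu : IsUnit (f u) := by
      have hh : f u = w := by
        calc f u = f u * (f a * w) := by rw [hw1, mul_one]
          _ = (f u * f a) * w := by rw [mul_assoc]
          _ = w := by rw [← f.map_mul, hu, f.map_one, one_mul]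
      rw [hh]
      exact ⟨⟨w, f a, hw2, hw1⟩, rfl⟩
    obtain ⟨v, hv⟩ := hleft u hfu
    have hva : v = a := by
      calc v = v * (u * a) := by rw [hu, mul_one]
        _ = v * u * a := by rw [mul_assoc]
        _ = a := by rw [hv, one_mul]
    exact ⟨⟨a, u, by rw [← hva]; exact hv, hu⟩, rfl⟩
  -- conclude
  refine ⟨fun {a b} hab => ?_⟩
  by_cases hfa : f a = 0
  · right
    apply hunitlift
    apply hQunit
    have : f a + f b = 1 := by rw [← f.map_add, hab, f.map_one]
    rw [hfa, zero_add] at this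
    rw [this]
    exact one_ne_zero
  · left
    exact hunitlift a (hQunit _ hfa)
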